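/- For every x ∈ [0, π], the inequality π (1 − cos x) ≥ x − sin x holds. -/

import Mathlib

open Real

lemma aux_mono (x : ℝ) (hx : x ∈ Set.Icc 0 π) : x - sin x ≤ 2 * x ^ 2 / π := by
  obtain ⟨h0, h1⟩ := hx
  have hpi := pi_pos
  have key : MonotoneOn (fun y : ℝ => 2 * y ^ 2 / π - y + sin y) (Set.Icc 0 π) := by
    apply monotoneOn_of_deriv_nonneg (convex_Icc 0 π)
    · fun_prop
    · fun_prop
    · intro y hy
      simp only [interior_Icc, Set.mem_Ioo] at hy
      have hd : deriv (fun y : ℝ => 2 * y ^ 2 / π - y + sin y) y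
          = 4 * y / π - 1 + cos y := by
        have : HasDerivAt (fun y : ℝ => 2 * y ^ 2 / π - y + sin y)
            (2 * (2 * y) / π - 1 + cos y) y := by
          have := (((hasDerivAt_pow 2 y).const_mul (2:ℝ)).div_const π).sub
            (hasDerivAt_id y) |>.add (hasDerivAt_sin y)
          simpa [Pi.add_def, Pi.sub_def] using this
        rw [this.deriv]; ring
      rw [hd]
      rcases le_or_gt y (π / 2) with h | h
      · have hc : 1 - y ^ 2 / 2 ≤ cos y := one_sub_sq_div_two_le_cos
        have hy2 : y ^ 2 / 2 ≤ 4 * y / π := by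
          rw [div_le_div_iff₀ (by norm_num) hpi]
          nlinarith [pi_le_four, hy.1, hy.2]
        linarith
      · have hc : -1 ≤ cos y := neg_one_le_cos y
        have : (2:ℝ) ≤ 4 * y / π := by
          rw [le_div_iff₀ hpi]; linarith
        linarith
  have := key (Set.left_mem_Icc.2 hpi.le) ⟨h0, h1⟩ h0
  simp only [ne_eq, mul_zero, zero_pow, sin_zero] at this
  norm_num at this
  linarith
/-- For `x ∈ [0, π]`, `π (1 − cos x) ≥ x − sin x`. -/
theorem pi_one_sub_cos_ge (x : ℝ) (hx : x ∈ Set.Icc 0 π) :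
    x - sin x ≤ π * (1 - cos x) := by
  have h1 := aux_mono x hx
  have h2 : cos x ≤ 1 - 2 / π ^ 2 * x ^ 2 :=
    cos_le_one_sub_mul_cos_sq (by rw [abs_of_nonneg hx.1]; exact hx.2)
  have hpi := pi_pos
  have key : 0 ≤ π ^ 2 * (1 - cos x - 2 / π ^ 2 * x ^ 2) :=
    mul_nonneg (sq_nonneg π) (by linarith)
  have hne : π ≠ 0 := hpi.ne'
  field_simp at key
  have : 2 * x ^ 2 / π ≤ π * (1 - cos x) := by
    rw [div_le_iff₀ hpi]
    nlinarith [key]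
  linarith
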